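/- Let f be additive on T with f(j) > 0 for all j, let c : T → ℝ≥0, and fix a payment p ≥ 0. For each agent i define wᵢ = Σ_{j ∈ Tᵢ : c(j)/f(j) ≤ p} f(j), and assume w₁ ≥ w₂ ≥ … ≥ w_n ≥ 0. Then max over subsets S ⊆ [n] of (1 - p·|S|)·Σ_{i∈S} wᵢ is attained by a prefix S = {1,…,k} for some 0 ≤ k ≤ n. -/

import Mathlib

lemma fin_strictMono_le {m n : ℕ} {f : Fin m → Fin n} (hf : StrictMono f)
    (j : Fin m) : (j : ℕ) ≤ (f j : ℕ) := by
  obtain ⟨v, hv⟩ := j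
  induction v with
  | zero => exact Nat.zero_le _
  | succ i ih =>
    have hi : i < m := Nat.lt_of_succ_lt hv
    have h1 := ih hi
    have h2 : f ⟨i, hi⟩ < f ⟨i + 1, hv⟩ := hf (by simp [Fin.lt_def])
    have h3 : (f ⟨i, hi⟩ : ℕ) < (f ⟨i + 1, hv⟩ : ℕ) := h2
    simp only [Fin.val_mk] at h1 ⊢
    omega

lemma prefix_sum_ge (n : ℕ) (w : Fin n → ℝ)
    (hmono : ∀ i j : Fin n, i ≤ j → w j ≤ w i) (S : Finset (Fin n)) :
    ∑ i ∈ S, w i ≤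
      ∑ i ∈ Finset.univ.filter (fun i : Fin n => (i : ℕ) < S.card), w i := by
  set m := S.card with hm
  have hmn : m ≤ n := by simpa using S.card_le_univ
  have hP : Finset.univ.filter (fun i : Fin n => (i : ℕ) < m)
      = (Finset.univ : Finset (Fin m)).map (Fin.castLEEmb hmn) := by
    ext i
    simp only [Finset.mem_filter, Finset.mem_univ, true_and, Finset.mem_map]
    constructor
    · intro hi
      exact ⟨⟨(i : ℕ), hi⟩, Fin.ext rfl⟩
    · rintro ⟨j, rfl⟩
      simpa using j.isLt
  rw [hP, Finset.sum_map]
  have e := S.orderIsoOfFin hm.symm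
  have hSsum : ∑ i ∈ S, w i = ∑ j : Fin m, w (e j) := by
    rw [← Finset.sum_attach S w]
    exact (Fintype.sum_equiv e.toEquiv _ _ (fun j => rfl)).symm
  rw [hSsum]
  apply Finset.sum_le_sum
  intro j _
  apply hmono
  have hsm : StrictMono (fun j : Fin m => ((e j : Fin n))) := fun a b h => by
    exact_mod_cast e.strictMono h
  have := fin_strictMono_le hsm j
  exact Fin.le_def.mpr (by simpa using this)

/-- For nonincreasing nonnegative weights `w₁ ≥ … ≥ w_n ≥ 0` and a
payment `p ≥ 0`, the objective `(1 - p·|S|)·∑_{i∈S} wᵢ` over subsets `S ⊆ [n]`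
is maximized by a prefix `{1,…,k}`. -/
theorem stmt_17 (n : ℕ) (w : Fin n → ℝ) (hw : ∀ i, 0 ≤ w i)
    (hmono : ∀ i j : Fin n, i ≤ j → w j ≤ w i)
    (p : ℝ) (hp : 0 ≤ p) :
    ∃ k ≤ n, ∀ S : Finset (Fin n),
      (1 - p * (S.card : ℝ)) * ∑ i ∈ S, w i ≤
        (1 - p * (k : ℝ)) *
          ∑ i ∈ Finset.univ.filter (fun i : Fin n => (i : ℕ) < k), w i := by
  set h : ℕ → ℝ := fun k =>
    (1 - p * (k : ℝ)) * ∑ i ∈ Finset.univ.filter (fun i : Fin n => (i : ℕ) < k), w i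
    with hh
  obtain ⟨k, hk, hkmax⟩ := (Finset.range (n + 1)).exists_max_image h
    ⟨0, Finset.mem_range.mpr (Nat.succ_pos n)⟩
  have hkn : k ≤ n := Nat.lt_succ_iff.mp (Finset.mem_range.mp hk)
  refine ⟨k, hkn, fun S => ?_⟩
  have hsum0 : 0 ≤ ∑ i ∈ S, w i := Finset.sum_nonneg fun i _ => hw i
  have h0 : h 0 ≤ h k := hkmax 0 (Finset.mem_range.mpr (Nat.succ_pos n))
  have h0eq : h 0 = 0 := by simp [hh]
  by_cases hc : 1 - p * (S.card : ℝ) < 0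
  · calc (1 - p * (S.card : ℝ)) * ∑ i ∈ S, w i ≤ 0 :=
          mul_nonpos_of_nonpos_of_nonneg hc.le hsum0
      _ ≤ h k := h0eq ▸ h0
  · push_neg at hc
    have hSn : S.card ≤ n := by simpa using S.card_le_univ
    have h1 : (1 - p * (S.card : ℝ)) * ∑ i ∈ S, w i ≤ h S.card :=
      mul_le_mul_of_nonneg_left (prefix_sum_ge n w hmono S) hc
    exact h1.trans (hkmax _ (Finset.mem_range.mpr (Nat.lt_succ_of_le hSn)))
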